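/- Let i ≥ 4. If the Jaconian set of J_{i−1}(1) is a singleton, say 𝕁(J_{i−1}(1)) = {k}, then k + f(k) < i and (k+1) + f(k+1) > i. -/
import Mathlib


/-- The Jaco out-degree function `f`: `f 0 = 0` and, for `n ≥ 1`,
`f n = n - #{k : 1 ≤ k < n ∧ k + f k ≥ n}` (the out-degree of `v_n` in `J_∞(1)`). -/
def jacoF : ℕ → ℕ
  | 0 => 0
  | n + 1 =>
    (n + 1) - ((Finset.range (n + 1)).attach.filter
      (fun a => 1 ≤ a.1 ∧ n + 1 ≤ a.1 + jacoF a.1)).card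
  decreasing_by all_goals exact Finset.mem_range.mp a.2

/-- The in-degree `d⁻(j) = #{i : 1 ≤ i < j ∧ j ≤ i + f i}` of `v_j` in `J_∞(1)`. -/
def jacoDin (j : ℕ) : ℕ := ((Finset.Ico 1 j).filter (fun i => j ≤ i + jacoF i)).card

/-- The degree `d_n(j) = d⁻(j) + #{k : j < k ≤ n ∧ k ≤ j + f j}` of `v_j` in the
underlying undirected graph of the finite Jaco graph `J_n(1)`. -/
def jacoDeg (n j : ℕ) : ℕ :=
  jacoDin j + ((Finset.Ioc j n).filter (fun k => k ≤ j + jacoF j)).card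

/-- The maximum degree `Δ(J_n(1)) = max_{1 ≤ j ≤ n} d_n(j)`. -/
def jacoDelta (n : ℕ) : ℕ := (Finset.Icc 1 n).sup (jacoDeg n)

/-- The Jaconian set `𝕁(J_n(1)) = {j : 1 ≤ j ≤ n ∧ d_n(j) = Δ(J_n(1))}`. -/
def jacoJ (n : ℕ) : Finset ℕ := (Finset.Icc 1 n).filter (fun j => jacoDeg n j = jacoDelta n)

lemma jacoF_succ (n : ℕ) : jacoF (n + 1) = (n + 1) - jacoDin (n + 1) := by
  rw [jacoF, jacoDin,
    Finset.filter_attach (fun x => 1 ≤ x ∧ n + 1 ≤ x + jacoF x) (Finset.range (n + 1)),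
    Finset.card_map, Finset.card_attach]
  congr 2
  ext a
  simp only [Finset.mem_filter, Finset.mem_range, Finset.mem_Ico]
  tauto

lemma jacoDin_le (n : ℕ) : jacoDin (n + 1) ≤ n := by
  have := Finset.card_filter_le (Finset.Ico 1 (n + 1)) (fun i => n + 1 ≤ i + jacoF i)
  simpa [jacoDin, Nat.card_Ico] using this

lemma jacoF_add_jacoDin (n : ℕ) (h : 1 ≤ n) : jacoF n + jacoDin n = n := by
  cases n with
  | zero => omega
  | succ m =>
    have h1 := jacoF_succ m
    have h2 := jacoDin_le m
    omega

lemma jacoDin_succ_le (n : ℕ) : jacoDin (n + 1) ≤ jacoDin n + 1 := by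
  rw [jacoDin, jacoDin]
  calc ((Finset.Ico 1 (n+1)).filter (fun i => n + 1 ≤ i + jacoF i)).card
      ≤ (insert n ((Finset.Ico 1 n).filter (fun i => n ≤ i + jacoF i))).card := by
        apply Finset.card_le_card
        intro a ha
        simp only [Finset.mem_filter, Finset.mem_Ico, Finset.mem_insert] at ha ⊢
        omega
    _ ≤ _ := Finset.card_insert_le _ _

lemma jacoF_mono : Monotone jacoF := by
  apply monotone_nat_of_le_succ
  intro n
  match n with
  | 0 =>
    have : jacoF 0 = 0 := by rw [jacoF]
    omega
  | m + 1 =>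
    have h1 := jacoF_add_jacoDin (m + 1) (by omega)
    have h2 := jacoF_add_jacoDin (m + 1 + 1) (by omega)
    have h3 := jacoDin_succ_le (m + 1)
    omega

lemma jacoF_pos (n : ℕ) (h : 1 ≤ n) : 1 ≤ jacoF n := by
  cases n with
  | zero => omega
  | succ m =>
    have h1 := jacoF_succ m
    have h2 := jacoDin_le m
    omega

lemma jacoF_two : jacoF 2 = 1 := by
  have hJ1 : jacoF 1 = 1 := by
    have := jacoF_add_jacoDin 1 le_rfl
    have h0 : jacoDin 1 = 0 := by simp [jacoDin]
    omega
  have hD2 : jacoDin 2 = 1 := by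
    rw [jacoDin, show Finset.Ico 1 2 = {1} from rfl]
    rw [Finset.filter_singleton]
    simp [hJ1]
  have := jacoF_add_jacoDin 2 (by omega)
  omega

lemma jacoDeg_eq (n j : ℕ) (h2 : j ≤ n) :
    jacoDeg n j = jacoDin j + (min n (j + jacoF j) - j) := by
  rw [jacoDeg]
  congr 1
  have : (Finset.Ioc j n).filter (fun k => k ≤ j + jacoF j)
      = Finset.Ioc j (min n (j + jacoF j)) := by
    ext x
    simp only [Finset.mem_filter, Finset.mem_Ioc, lt_min_iff, le_min_iff]
    omega
  rw [this, Nat.card_Ioc]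

/-- If the Jaconian set of `J_{i-1}(1)` is a singleton `{k}`, then `k + f k < i` and
`(k+1) + f (k+1) > i`. -/
theorem stmt_3 (i k : ℕ) (hi : 4 ≤ i) (h : jacoJ (i - 1) = {k}) :
    k + jacoF k < i ∧ (k + 1) + jacoF (k + 1) > i := by
  set n := i - 1 with hn_def
  have hn : 3 ≤ n := by omega
  have hi_eq : i = n + 1 := by omega
  -- facts from singleton
  have hkmem : k ∈ jacoJ n := by rw [h]; exact Finset.mem_singleton_self k
  have huniq : ∀ j, j ∈ jacoJ n → j = k := by
    intro j hj; rw [h] at hj; exact Finset.mem_singleton.mp hj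
  rw [jacoJ, Finset.mem_filter, Finset.mem_Icc] at hkmem
  obtain ⟨⟨hk1, hkn⟩, hkdeg⟩ := hkmem
  have hmemJ : ∀ j, 1 ≤ j → j ≤ n → jacoDeg n j = jacoDelta n → j = k := by
    intro j h1 h2 h3
    exact huniq j (by rw [jacoJ, Finset.mem_filter, Finset.mem_Icc]; exact ⟨⟨h1, h2⟩, h3⟩)
  have hle_sup : ∀ j, 1 ≤ j → j ≤ n → jacoDeg n j ≤ jacoDelta n := by
    intro j h1 h2
    exact Finset.le_sup (Finset.mem_Icc.mpr ⟨h1, h2⟩)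
  -- the largest m with m + f m ≤ n
  have hP2 : 2 + jacoF 2 ≤ n := by
    have := jacoF_two
    omega
  set m := Nat.findGreatest (fun j => j + jacoF j ≤ n) n with hm_def
  have hm_spec : m + jacoF m ≤ n :=
    Nat.findGreatest_spec (P := fun j => j + jacoF j ≤ n) (by omega : 2 ≤ n) hP2
  have hm2 : 2 ≤ m := Nat.le_findGreatest (by omega) hP2
  have hmfpos := jacoF_pos m (by omega)
  have hm_lt : m < n := by omega
  have hm1 : n < m + 1 + jacoF (m + 1) := by
    by_contra hc
    exact Nat.findGreatest_is_greatest (lt_add_one m) (by omega) (by omega)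
  -- degree of m is m
  have hdm : jacoDeg n m = m := by
    rw [jacoDeg_eq n m (by omega), min_eq_right (by omega)]
    have := jacoF_add_jacoDin m (by omega)
    omega
  -- Part 1 : k + f k ≤ n
  have part1 : k + jacoF k ≤ n := by
    by_contra hc
    push_neg at hc
    -- k > m since j ↦ j + f j monotone
    have hkm : m + 1 ≤ k := by
      by_contra hkm
      have : jacoF k ≤ jacoF m := jacoF_mono (by omega)
      omega
    have hfk : jacoF (m + 1) ≤ jacoF k := jacoF_mono hkm
    have hfm1 : n - m ≤ jacoF (m + 1) := by omega
    -- degree of k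
    have hdk : jacoDeg n k = jacoDin k + (n - k) := by
      rw [jacoDeg_eq n k hkn, min_eq_left (by omega)]
    have hsum_k := jacoF_add_jacoDin k (by omega)
    -- Δ = n - f k ≤ m, and deg m = m ≤ Δ, so m attains Δ
    have hΔ : jacoDelta n = jacoDeg n k := hkdeg.symm
    have hmsup := hle_sup m (by omega) (by omega)
    have hmk : m = k := hmemJ m (by omega) (by omega) (by omega)
    omega
  refine ⟨by omega, ?_⟩
  -- Part 2 : n + 1 < k + 1 + f (k+1)
  have hdk : jacoDeg n k = k := by
    rw [jacoDeg_eq n k hkn, min_eq_right (by omega)]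
    have := jacoF_add_jacoDin k (by omega)
    omega
  by_contra hc
  push_neg at hc
  rw [hi_eq] at hc
  have hfk1pos := jacoF_pos (k + 1) (by omega)
  have hk1n : k + 1 ≤ n := by omega
  rcases Nat.lt_or_ge n (k + 1 + jacoF (k + 1)) with hcase | hcase
  · -- k+1+f(k+1) = n+1 : deg (k+1) = k = Δ
    have hdk1 : jacoDeg n (k + 1) = jacoDin (k + 1) + (n - (k + 1)) := by
      rw [jacoDeg_eq n (k + 1) hk1n, min_eq_left (by omega)]
    have hsum := jacoF_add_jacoDin (k + 1) (by omega)
    have : k + 1 = k := hmemJ (k + 1) (by omega) hk1n (by omega)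
    omega
  · -- k+1+f(k+1) ≤ n : deg (k+1) = k+1 > Δ = k
    have hdk1 : jacoDeg n (k + 1) = k + 1 := by
      rw [jacoDeg_eq n (k + 1) hk1n, min_eq_right (by omega)]
      have := jacoF_add_jacoDin (k + 1) (by omega)
      omega
    have := hle_sup (k + 1) (by omega) hk1n
    omega
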